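/- Let F_q be a finite field, A an invertible n×n matrix over F_q, and C' ⊆ F_q^n a linear code of dimension k' all of whose nonzero codewords have Hamming weight at least d. Let F' = F_A(C') be its dynamic frozen index set, and let T ⊆ {0,…,n−1} be any set of indices with T ∩ F' = ∅ and |T| = k' − k for some 0 ≤ k ≤ k'. Then the polar subcode C = { uA : u ∈ F_q^n, uA ∈ C', and u_s = 0 for all s ∈ T } is a linear subcode of C' of dimension exactly k, and every nonzero codeword of C has Hamming weight at least d. -/

import Mathlib

/-- The dynamic frozen index set `F_A(C)` of a linear code `C ⊆ F_q^n` with respect to an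
invertible matrix `A`: the set of indices `t` that arise as the last nonzero position of
some nonzero vector `v` in the orthogonal complement (w.r.t. the standard bilinear form)
of the subspace `{u : uA ∈ C}`. -/
def frozenSet {F : Type*} [Field F] {n : ℕ} (A : Matrix (Fin n) (Fin n) F)
    (C : Submodule F (Fin n → F)) : Set (Fin n) :=
  {t | ∃ v : Fin n → F,
    (∀ u : Fin n → F, Matrix.vecMul u A ∈ C → ∑ s, u s * v s = 0) ∧
    v ≠ 0 ∧ v t ≠ 0 ∧ ∀ s, t < s → v s = 0}

/-- Polar subcodes. Let `C'` be an `(n, k', d)` code (every nonzero codeword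
has weight at least `d`), `A` invertible, `F' = F_A(C')` its dynamic frozen index set, and
`T` a set of indices disjoint from `F'` with `|T| = k' − k`, `k ≤ k'`. Then the polar
subcode `C = { uA : uA ∈ C', u_s = 0 for all s ∈ T }` is a linear subcode of `C'` of
dimension exactly `k`, and every nonzero codeword of `C` has Hamming weight at least `d`. -/
theorem polar_subcode_dim_and_dist {F : Type*} [Field F] [Fintype F] [DecidableEq F]
    {n k k' d : ℕ}
    (A : Matrix (Fin n) (Fin n) F) (hA : IsUnit A)
    (C' : Submodule F (Fin n → F)) (hk' : Module.finrank F C' = k')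
    (hd : ∀ c ∈ C', c ≠ 0 → d ≤ hammingNorm c)
    (T : Finset (Fin n)) (hTF : ∀ t ∈ T, t ∉ frozenSet A C')
    (hk : k ≤ k') (hT : T.card = k' - k) :
    ∃ C : Submodule F (Fin n → F),
      (C : Set (Fin n → F)) =
        {c | ∃ u : Fin n → F, c = Matrix.vecMul u A ∧ c ∈ C' ∧ ∀ s ∈ T, u s = 0} ∧
      C ≤ C' ∧ Module.finrank F C = k ∧
      ∀ c ∈ C, c ≠ 0 → d ≤ hammingNorm c := by
  classical
  have hdet : IsUnit A.det := (Matrix.isUnit_iff_isUnit_det A).mp hA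
  let e : (Fin n → F) ≃ₗ[F] (Fin n → F) :=
    LinearEquiv.ofLinear A.vecMulLinear A⁻¹.vecMulLinear
      (LinearMap.ext fun u => by
        simp [Matrix.vecMul_vecMul, Matrix.nonsing_inv_mul A hdet])
      (LinearMap.ext fun u => by
        simp [Matrix.vecMul_vecMul, Matrix.mul_nonsing_inv A hdet])
  set B : Submodule F (Fin n → F) := C'.comap A.vecMulLinear with hB
  set g : B →ₗ[F] (↥T → F) :=
    (LinearMap.pi fun s : ↥T => LinearMap.proj (s : Fin n)).comp B.subtype with hg
  have hgapply : ∀ (x : B) (s : ↥T), g x s = (x : Fin n → F) s := fun x s => rfl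
  -- surjectivity of g
  have hsurj : LinearMap.range g = ⊤ := by
    by_contra hne
    obtain ⟨φ, hφ0, hφ⟩ :=
      (LinearMap.range g).exists_dual_map_eq_bot_of_lt_top (lt_top_iff_ne_top.mpr hne)
        inferInstance
    set v' : Fin n → F := fun j =>
      if h : j ∈ T then φ (fun j' => if (⟨j, h⟩ : ↥T) = j' then 1 else 0) else 0 with hv'
    have hval : ∀ s : ↥T, v' (s : Fin n) = φ (fun j' => if s = j' then 1 else 0) := by
      intro s
      rw [hv']
      simp only [s.2, dif_pos, Subtype.coe_eta]
    have hv'ne : v' ≠ 0 := by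
      intro h0
      apply hφ0
      refine LinearMap.ext fun x => ?_
      rw [LinearMap.pi_apply_eq_sum_univ φ x]
      refine Finset.sum_eq_zero fun s _ => ?_
      rw [← hval s, h0]
      simp
    have hzero : ∀ u : Fin n → F, Matrix.vecMul u A ∈ C' → ∑ s, u s * v' s = 0 := by
      intro u hu
      have hmem : g ⟨u, hu⟩ ∈ LinearMap.range g := ⟨⟨u, hu⟩, rfl⟩
      have hφg : φ (g ⟨u, hu⟩) = 0 := by
        have : φ (g ⟨u, hu⟩) ∈ (LinearMap.range g).map φ := ⟨_, hmem, rfl⟩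
        rwa [hφ, Submodule.mem_bot] at this
      rw [LinearMap.pi_apply_eq_sum_univ φ (g ⟨u, hu⟩)] at hφg
      rw [← hφg]
      calc ∑ s, u s * v' s
          = ∑ s ∈ T, u s * v' s :=
            (Finset.sum_subset T.subset_univ (fun x _ hx => by simp [hv', hx])).symm
        _ = ∑ i : ↥T, u ↑i * v' ↑i := (Finset.sum_coe_sort T _).symm
        _ = ∑ i : ↥T, g ⟨u, hu⟩ i • φ (fun j => if i = j then 1 else 0) := by
            refine Finset.sum_congr rfl fun i _ => ?_
            rw [hgapply, smul_eq_mul, hval]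
    obtain ⟨j, hj⟩ := Function.ne_iff.mp hv'ne
    set S : Finset (Fin n) := Finset.univ.filter (fun j => v' j ≠ 0) with hS
    have hjS : j ∈ S := by
      simp only [hS, Finset.mem_filter, Finset.mem_univ, true_and]
      simpa using hj
    have hSne : S.Nonempty := ⟨j, hjS⟩
    set t := S.max' hSne with ht
    have htS : t ∈ S := S.max'_mem hSne
    have hvt : v' t ≠ 0 := by simpa [hS] using htS
    have htT : t ∈ T := by
      by_contra h
      exact hvt (by simp [hv', h])
    refine hTF t htT ⟨v', hzero, hv'ne, hvt, fun s hs => ?_⟩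
    by_contra hvs
    exact absurd (S.le_max' s (by simp [hS, hvs])) (not_le.mpr hs)
  -- dimension of B
  have hBrank : Module.finrank F B = k' := by
    have hBe : B = C'.comap (e : (Fin n → F) →ₗ[F] (Fin n → F)) := rfl
    rw [hBe, Submodule.comap_equiv_eq_map_symm, LinearEquiv.finrank_map_eq, hk']
  have hker : Module.finrank F (LinearMap.ker g) = k := by
    have := LinearMap.finrank_range_add_finrank_ker g
    rw [hsurj, finrank_top, hBrank] at this
    have hTcard : Module.finrank F (↥T → F) = k' - k := by
      rw [Module.finrank_pi, Fintype.card_coe, hT]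
    rw [hTcard] at this
    omega
  set K : Submodule F (Fin n → F) := (LinearMap.ker g).map B.subtype with hK
  have hKmem : ∀ u : Fin n → F,
      u ∈ K ↔ Matrix.vecMul u A ∈ C' ∧ ∀ s ∈ T, u s = 0 := by
    intro u
    constructor
    · rintro ⟨⟨u, huB⟩, hker, rfl⟩
      refine ⟨huB, fun s hs => ?_⟩
      have := congrFun (LinearMap.mem_ker.mp hker) ⟨s, hs⟩
      simpa [hgapply] using this
    · rintro ⟨h1, h2⟩
      have hg0 : g ⟨u, h1⟩ = 0 := by
        funext s
        simpa [hgapply] using h2 s s.2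
      exact ⟨⟨u, h1⟩, hg0, rfl⟩
  refine ⟨K.map A.vecMulLinear, ?_, ?_, ?_, ?_⟩
  · ext c
    simp only [Submodule.map_coe, Set.mem_image, SetLike.mem_coe, Set.mem_setOf_eq]
    constructor
    · rintro ⟨u, hu, rfl⟩
      obtain ⟨h1, h2⟩ := (hKmem u).mp hu
      exact ⟨u, rfl, h1, h2⟩
    · rintro ⟨u, rfl, h1, h2⟩
      exact ⟨u, (hKmem u).mpr ⟨h1, h2⟩, rfl⟩
  · rintro c ⟨u, hu, rfl⟩
    exact ((hKmem u).mp hu).1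
  · have h1 : Module.finrank F (K.map A.vecMulLinear) = Module.finrank F K :=
      LinearEquiv.finrank_map_eq e K
    rw [h1, hK, Submodule.finrank_map_subtype_eq, hker]
  · rintro c ⟨u, hu, rfl⟩ hc0
    exact hd _ ((hKmem u).mp hu).1 hc0
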